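/- Let P = {p_k : k ≥ 1} be a probability distribution on a countably infinite alphabet with all p_k > 0 satisfying, for all k ≥ k_0 for some integer k_0 ≥ 1, either p_k = a e^{−λ k}, or p_k = b e^{−λ k²}, or p_k = c k^{r} e^{−λ k}, where λ > 0, r ∈ (−∞, ∞), a > 0, b > 0 and c > 0 are constants. Then P belongs to Domain 1, i.e., the effective cardinality of P is infinite and t_n is bounded above uniformly in n. -/

import Mathlib

open Filter Topology

/-- The tail index `t_n = n * ∑_k p_k (1 - p_k)^n`. -/
noncomputable def tailIndex (p : ℕ → ℝ) (n : ℕ) : ℝ :=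
  (n : ℝ) * ∑' k, p k * (1 - p k) ^ n


lemma aux_y_exp (y : ℝ) (hy : 0 ≤ y) : y * Real.exp (-y) ≤ 1 := by
  have h := Real.add_one_le_exp y
  have h2 : y * Real.exp (-y) ≤ Real.exp y * Real.exp (-y) :=
    mul_le_mul_of_nonneg_right (by linarith) (Real.exp_nonneg _)
  calc y * Real.exp (-y) ≤ Real.exp y * Real.exp (-y) := h2
    _ = 1 := by rw [← Real.exp_add]; simp

lemma aux_pow_exp (x : ℝ) (hx1 : x ≤ 1) (n : ℕ) :
    (1 - x) ^ n ≤ Real.exp (-((n : ℝ) * x)) := by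
  have h1 : 1 - x ≤ Real.exp (-x) := by
    have := Real.add_one_le_exp (-x); linarith
  calc (1 - x) ^ n ≤ (Real.exp (-x)) ^ n := pow_le_pow_left₀ (by linarith) h1 n
    _ = Real.exp (-((n:ℝ) * x)) := by
        rw [← Real.exp_nat_mul]; ring_nf

lemma term_le_one (x : ℝ) (hx0 : 0 ≤ x) (hx1 : x ≤ 1) (n : ℕ) :
    (n : ℝ) * (x * (1 - x) ^ n) ≤ 1 := by
  have h := aux_pow_exp x hx1 n
  have hnx : 0 ≤ (n:ℝ) * x := by positivity
  calc (n : ℝ) * (x * (1 - x) ^ n) ≤ (n:ℝ) * (x * Real.exp (-((n:ℝ)*x))) := by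
        apply mul_le_mul_of_nonneg_left (mul_le_mul_of_nonneg_left h hx0) (Nat.cast_nonneg n)
    _ = ((n:ℝ)*x) * Real.exp (-((n:ℝ)*x)) := by ring
    _ ≤ 1 := aux_y_exp _ hnx

lemma term_le_four_div (x : ℝ) (hx0 : 0 < x) (hx1 : x ≤ 1) (n : ℕ) :
    (n : ℝ) * (x * (1 - x) ^ n) ≤ 4 / ((n:ℝ) * x) := by
  rcases Nat.eq_zero_or_pos n with hn | hn
  · subst hn; simp
  set y := (n:ℝ) * x with hy
  have hypos : 0 < y := by
    have : (0:ℝ) < n := by exact_mod_cast hn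
    positivity
  have key : y * y * (1 - x)^n ≤ 4 := by
    have h := aux_pow_exp x hx1 n
    have h2 : y/2 * Real.exp (-(y/2)) ≤ 1 := aux_y_exp _ (by positivity)
    have h3 : (y/2 * Real.exp (-(y/2))) * (y/2 * Real.exp (-(y/2))) ≤ 1 :=
      mul_le_one₀ h2 (by positivity) h2
    have h4 : Real.exp (-(y/2)) * Real.exp (-(y/2)) = Real.exp (-y) := by
      rw [← Real.exp_add]; ring_nf
    have h5 : y * y * Real.exp (-y) ≤ 4 := by nlinarith
    have h6 : y * y * (1-x)^n ≤ y * y * Real.exp (-y) := by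
      apply mul_le_mul_of_nonneg_left h (by positivity)
    linarith
  rw [le_div_iff₀ hypos]
  calc (n : ℝ) * (x * (1 - x) ^ n) * y = y * y * (1-x)^n := by rw [hy]; ring
    _ ≤ 4 := key

lemma bounded_of_ratio (p : ℕ → ℝ) (hp : ∀ k, 0 < p k) (hp1 : ∀ k, p k ≤ 1)
    (hs : Summable p) (k₁ : ℕ) (ρ : ℝ) (hρ0 : 0 ≤ ρ) (hρ1 : ρ < 1)
    (hr : ∀ k, k₁ ≤ k → p (k+1) ≤ ρ * p k) :
    ∀ n : ℕ, tailIndex p n ≤ (k₁ : ℝ) + 5 * (1-ρ)⁻¹ := by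
  classical
  have hinv : 0 < (1-ρ)⁻¹ := by
    apply inv_pos.mpr; linarith
  have hiter : ∀ k, k₁ ≤ k → ∀ j, p (k+j) ≤ ρ^j * p k := by
    intro k hk j
    induction j with
    | zero => simp
    | succ j ih =>
      have h1 : p (k+j+1) ≤ ρ * p (k+j) := hr (k+j) (by omega)
      calc p (k+(j+1)) = p (k+j+1) := by ring_nf
        _ ≤ ρ * p (k+j) := h1
        _ ≤ ρ * (ρ^j * p k) := mul_le_mul_of_nonneg_left ih hρ0
        _ = ρ^(j+1) * p k := by ring
  intro n
  rcases Nat.eq_zero_or_pos n with hn | hn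
  · subst hn; simp [tailIndex]; positivity
  have hnR : (0:ℝ) < n := by exact_mod_cast hn
  set f : ℕ → ℝ := fun k => (n:ℝ) * (p k * (1 - p k)^n) with hfdef
  have hf_nonneg : ∀ k, 0 ≤ f k := by
    intro k
    exact mul_nonneg (Nat.cast_nonneg n)
      (mul_nonneg (hp k).le (pow_nonneg (by linarith [hp1 k]) n))
  have hf_le : ∀ k, f k ≤ (n:ℝ) * p k := by
    intro k
    have h1 : (1 - p k)^n ≤ 1 := pow_le_one₀ (by linarith [hp1 k]) (by linarith [hp k])
    have := (hp k).le
    calc f k = (n:ℝ) * (p k * (1 - p k)^n) := rfl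
      _ ≤ (n:ℝ) * (p k * 1) := by
          apply mul_le_mul_of_nonneg_left (mul_le_mul_of_nonneg_left h1 this) (Nat.cast_nonneg n)
      _ = (n:ℝ) * p k := by ring
  have hf : Summable f :=
    Summable.of_nonneg_of_le hf_nonneg hf_le (hs.mul_left _)
  -- existence of m
  have hex : ∃ k, k₁ ≤ k ∧ (n:ℝ) * p k ≤ 1 := by
    have hpos : 0 < (n:ℝ) * p k₁ := by have := hp k₁; positivity
    obtain ⟨j, hj⟩ := exists_pow_lt_of_lt_one
      (show (0:ℝ) < 1/((n:ℝ) * p k₁) by positivity) hρ1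
    refine ⟨k₁ + j, Nat.le_add_right _ _, ?_⟩
    have h1 : p (k₁ + j) ≤ ρ^j * p k₁ := hiter k₁ le_rfl j
    have h2 : (n:ℝ) * p (k₁+j) ≤ (n:ℝ) * (ρ^j * p k₁) :=
      mul_le_mul_of_nonneg_left h1 (Nat.cast_nonneg n)
    have h3 : ρ^j * ((n:ℝ) * p k₁) < 1 := by
      rw [lt_div_iff₀ hpos] at hj
      linarith
    nlinarith
  set m := Nat.find hex with hmdef
  obtain ⟨hk₁m, hpm⟩ : k₁ ≤ m ∧ (n:ℝ) * p m ≤ 1 := Nat.find_spec hex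
  have hmin : ∀ k, k < m → k₁ ≤ k → 1 < (n:ℝ) * p k := by
    intro k hk hk1
    have := Nat.find_min hex hk
    push_neg at this
    exact this hk1
  -- split tsum
  have hTI : tailIndex p n = ∑' k, f k := by
    rw [tailIndex, ← tsum_mul_left]
  have hsplit : ∑' k, f k = (∑ i ∈ Finset.range m, f i) + ∑' i, f (i + m) :=
    (Summable.sum_add_tsum_nat_add m hf).symm
  -- head: range k₁
  have hA1 : ∑ i ∈ Finset.Ico 0 k₁, f i ≤ (k₁:ℝ) := by
    calc ∑ i ∈ Finset.Ico 0 k₁, f i ≤ ∑ i ∈ Finset.Ico 0 k₁, 1 := by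
          apply Finset.sum_le_sum
          intro i _
          exact term_le_one (p i) (hp i).le (hp1 i) n
      _ = (k₁:ℝ) := by simp
  -- middle: Ico k₁ m
  have hA2 : ∑ k ∈ Finset.Ico k₁ m, f k ≤ 4 * (1-ρ)⁻¹ := by
    have hterm : ∀ k ∈ Finset.Ico k₁ m, f k ≤ 4 * ρ^(m-1-k) := by
      intro k hk
      rw [Finset.mem_Ico] at hk
      obtain ⟨hk1, hk2⟩ := hk
      have hm1 : m - 1 < m := by omega
      have h1lt : 1 < (n:ℝ) * p (m-1) := hmin (m-1) hm1 (by omega)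
      have hiter' : p (m-1) ≤ ρ^(m-1-k) * p k := by
        have := hiter k hk1 (m-1-k)
        rwa [show k + (m-1-k) = m-1 by omega] at this
      have h2 : 1 < ρ^(m-1-k) * ((n:ℝ) * p k) := by
        have := mul_le_mul_of_nonneg_left hiter' (Nat.cast_nonneg n : (0:ℝ) ≤ n)
        nlinarith
      have h3 : f k ≤ 4 / ((n:ℝ) * p k) := term_le_four_div (p k) (hp k) (hp1 k) n
      have hpk : 0 < (n:ℝ) * p k := by have := hp k; positivity
      have h4 : 4 / ((n:ℝ) * p k) ≤ 4 * ρ^(m-1-k) := by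
        rw [div_le_iff₀ hpk]
        nlinarith
      linarith
    calc ∑ k ∈ Finset.Ico k₁ m, f k ≤ ∑ k ∈ Finset.Ico k₁ m, 4 * ρ^(m-1-k) :=
          Finset.sum_le_sum hterm
      _ ≤ ∑ k ∈ Finset.range m, 4 * ρ^(m-1-k) := by
          apply Finset.sum_le_sum_of_subset_of_nonneg
          · intro x hx; rw [Finset.mem_Ico] at hx; exact Finset.mem_range.mpr hx.2
          · intro i _ _; positivity
      _ = 4 * ∑ k ∈ Finset.range m, ρ^(m-1-k) := by rw [Finset.mul_sum]
      _ = 4 * ∑ k ∈ Finset.range m, ρ^k := by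
          rw [Finset.sum_range_reflect (fun j => ρ^j) m]
      _ ≤ 4 * (1-ρ)⁻¹ := by
          have hle : ∑ k ∈ Finset.range m, ρ^k ≤ ∑' k, ρ^k :=
            Summable.sum_le_tsum _ (fun i _ => by positivity)
              (summable_geometric_of_lt_one hρ0 hρ1)
          rw [tsum_geometric_of_lt_one hρ0 hρ1] at hle
          linarith
  -- tail
  have hB : ∑' i, f (i + m) ≤ (1-ρ)⁻¹ := by
    have hterm : ∀ i : ℕ, f (i + m) ≤ ρ^i := by
      intro i
      have h1 : p (m + i) ≤ ρ^i * p m := hiter m hk₁m i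
      have h2 : f (i+m) ≤ (n:ℝ) * p (i+m) := hf_le _
      have h3 : (n:ℝ) * p (i+m) ≤ ρ^i * ((n:ℝ) * p m) := by
        rw [add_comm i m]
        nlinarith
      have h4 : ρ^i * ((n:ℝ) * p m) ≤ ρ^i * 1 :=
        mul_le_mul_of_nonneg_left hpm (by positivity)
      calc f (i+m) ≤ (n:ℝ) * p (i+m) := h2
        _ ≤ ρ^i * ((n:ℝ) * p m) := h3
        _ ≤ ρ^i := by linarith
    calc ∑' i, f (i+m) ≤ ∑' i, ρ^i :=
          Summable.tsum_le_tsum hterm ((summable_nat_add_iff m).mpr hf)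
            (summable_geometric_of_lt_one hρ0 hρ1)
      _ = (1-ρ)⁻¹ := tsum_geometric_of_lt_one hρ0 hρ1
  have hrange : ∑ i ∈ Finset.range m, f i ≤ (k₁:ℝ) + 4 * (1-ρ)⁻¹ := by
    have := Finset.sum_Ico_consecutive f (Nat.zero_le k₁) hk₁m
    rw [Finset.range_eq_Ico, ← this]
    linarith
  rw [hTI, hsplit]
  linarith

lemma case3_ratio (lam r c : ℝ) (hlam : 0 < lam) (hc : 0 < c) (k : ℕ)
    (hk1 : 1 ≤ k) (hkc : 2 * |r| / lam ≤ (k:ℝ)) :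
    c * ((k:ℝ)+1) ^ r * Real.exp (-lam * ((k:ℝ)+1)) ≤
      Real.exp (-(lam/2)) * (c * (k:ℝ) ^ r * Real.exp (-lam * (k:ℝ))) := by
  have hkpos : (0:ℝ) < (k:ℝ) := by exact_mod_cast hk1
  set q : ℝ := ((k:ℝ)+1)/(k:ℝ) with hq
  have hq1 : 1 ≤ q := by rw [hq, le_div_iff₀ hkpos]; linarith
  have hqpos : 0 < q := by linarith
  have hlogq : Real.log q ≤ 1/(k:ℝ) := by
    have := Real.log_le_sub_one_of_pos hqpos
    have : Real.log q ≤ q - 1 := this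
    have hqe : q - 1 = 1/(k:ℝ) := by rw [hq]; field_simp; ring
    linarith
  have hlog0 : 0 ≤ Real.log q := Real.log_nonneg hq1
  have hrlog : r * Real.log q ≤ lam/2 := by
    have h1 : r * Real.log q ≤ |r| * Real.log q :=
      mul_le_mul_of_nonneg_right (le_abs_self r) hlog0
    have h2 : |r| * Real.log q ≤ |r| * (1/(k:ℝ)) :=
      mul_le_mul_of_nonneg_left hlogq (abs_nonneg r)
    have h3 : |r| * (1/(k:ℝ)) ≤ lam/2 := by
      rw [mul_one_div, div_le_iff₀ hkpos]
      rw [div_le_iff₀ hlam] at hkc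
      linarith
    linarith
  have hqr : q ^ r ≤ Real.exp (lam/2) := by
    rw [Real.rpow_def_of_pos hqpos]
    exact Real.exp_le_exp.mpr (by linarith [hrlog, mul_comm r (Real.log q)])
  have hsplit : ((k:ℝ)+1) ^ r = (k:ℝ)^r * q^r := by
    rw [← Real.mul_rpow hkpos.le hqpos.le]
    congr 1
    rw [hq]; field_simp
  have hexp : Real.exp (-lam * ((k:ℝ)+1)) = Real.exp (-lam * (k:ℝ)) * Real.exp (-lam) := by
    rw [← Real.exp_add]; ring_nf
  rw [hsplit, hexp]
  have hkr : 0 < (k:ℝ)^r := Real.rpow_pos_of_pos hkpos r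
  have hq2 : q^r * Real.exp (-lam) ≤ Real.exp (-(lam/2)) := by
    calc q^r * Real.exp (-lam) ≤ Real.exp (lam/2) * Real.exp (-lam) :=
          mul_le_mul_of_nonneg_right hqr (Real.exp_nonneg _)
      _ = Real.exp (-(lam/2)) := by rw [← Real.exp_add]; ring_nf
  have hpos : 0 < c * (k:ℝ)^r * Real.exp (-lam * (k:ℝ)) := by positivity
  calc c * ((k:ℝ)^r * q^r) * (Real.exp (-lam * (k:ℝ)) * Real.exp (-lam))
      = (c * (k:ℝ)^r * Real.exp (-lam * (k:ℝ))) * (q^r * Real.exp (-lam)) := by ring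
    _ ≤ (c * (k:ℝ)^r * Real.exp (-lam * (k:ℝ))) * Real.exp (-(lam/2)) :=
        mul_le_mul_of_nonneg_left hq2 hpos.le
    _ = Real.exp (-(lam/2)) * (c * (k:ℝ) ^ r * Real.exp (-lam * (k:ℝ))) := by ring

/-- Any distribution with tail `p_k = a e^(−λk)`, `p_k = b e^(−λk²)`, or
`p_k = c k^r e^(−λk)` (for all `k ≥ k₀`, with `λ > 0`, `r ∈ ℝ`, `a, b, c > 0`)
is in Domain 1: its effective cardinality is infinite and `t_n` is bounded
above uniformly in `n`. -/
theorem stmt12 (p : ℕ → ℝ) (hp : ∀ k, 0 < p k) (hsum : ∑' k, p k = 1)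
    (lam r a b c : ℝ) (hlam : 0 < lam) (ha : 0 < a) (hb : 0 < b) (hc : 0 < c)
    (k₀ : ℕ) (hk₀ : 1 ≤ k₀)
    (hform :
      (∀ k : ℕ, k₀ ≤ k → p k = a * Real.exp (-lam * (k : ℝ))) ∨
      (∀ k : ℕ, k₀ ≤ k → p k = b * Real.exp (-lam * (k : ℝ) ^ 2)) ∨
      (∀ k : ℕ, k₀ ≤ k → p k = c * (k : ℝ) ^ r * Real.exp (-lam * (k : ℝ)))) :
    {k | 0 < p k}.Infinite ∧ ∃ u : ℝ, 0 < u ∧ ∀ n : ℕ, tailIndex p n ≤ u := by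
  constructor
  · have huniv : {k | 0 < p k} = Set.univ := Set.eq_univ_of_forall hp
    rw [huniv]; exact Set.infinite_univ
  · have hs : Summable p := by
      by_contra h
      rw [tsum_eq_zero_of_not_summable h] at hsum
      norm_num at hsum
    have hp1 : ∀ k, p k ≤ 1 := by
      intro k
      have := Summable.le_tsum hs k (fun j _ => (hp j).le)
      rw [hsum] at this
      exact this
    have hexp1 : Real.exp (-lam) < 1 := by
      rw [← Real.exp_zero]; exact Real.exp_lt_exp.mpr (by linarith)
    have hexp2 : Real.exp (-(lam/2)) < 1 := by
      rw [← Real.exp_zero]; exact Real.exp_lt_exp.mpr (by linarith)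
    obtain ⟨k₁, ρ, hρ0, hρ1, hr⟩ :
        ∃ (k₁ : ℕ) (ρ : ℝ), 0 ≤ ρ ∧ ρ < 1 ∧ ∀ k, k₁ ≤ k → p (k+1) ≤ ρ * p k := by
      rcases hform with h | h | h
      · refine ⟨k₀, Real.exp (-lam), Real.exp_nonneg _, hexp1, ?_⟩
        intro k hk
        rw [h (k+1) (by omega), h k hk]
        have e1 : -lam * ((k:ℝ)+1) = -lam + -lam * (k:ℝ) := by ring
        push_cast
        rw [e1, Real.exp_add]
        ring_nf
        exact le_refl _
      · refine ⟨k₀, Real.exp (-lam), Real.exp_nonneg _, hexp1, ?_⟩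
        intro k hk
        rw [h (k+1) (by omega), h k hk]
        have hkR : (0:ℝ) ≤ (k:ℝ) := Nat.cast_nonneg k
        have e1 : -lam * ((k:ℝ)+1)^2 = (-lam * (2*(k:ℝ)+1)) + (-lam * (k:ℝ)^2) := by ring
        push_cast
        rw [e1, Real.exp_add]
        have e2 : Real.exp (-lam * (2*(k:ℝ)+1)) ≤ Real.exp (-lam) :=
          Real.exp_le_exp.mpr (by nlinarith)
        have hpos : 0 < b * Real.exp (-lam * (k:ℝ)^2) := by positivity
        calc b * (Real.exp (-lam * (2*(k:ℝ)+1)) * Real.exp (-lam * (k:ℝ)^2))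
            = (b * Real.exp (-lam * (k:ℝ)^2)) * Real.exp (-lam * (2*(k:ℝ)+1)) := by ring
          _ ≤ (b * Real.exp (-lam * (k:ℝ)^2)) * Real.exp (-lam) :=
              mul_le_mul_of_nonneg_left e2 hpos.le
          _ = Real.exp (-lam) * (b * Real.exp (-lam * (k:ℝ)^2)) := by ring
      · refine ⟨max k₀ (max 1 ⌈2 * |r| / lam⌉₊), Real.exp (-(lam/2)),
          Real.exp_nonneg _, hexp2, ?_⟩
        intro k hk
        have hk0 : k₀ ≤ k := le_trans (le_max_left _ _) hk
        have hk1 : 1 ≤ k := le_trans (le_trans (le_max_left _ _) (le_max_right _ _)) hk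
        have hkc : 2 * |r| / lam ≤ (k:ℝ) := by
          have h1 : ⌈2 * |r| / lam⌉₊ ≤ k :=
            le_trans (le_trans (le_max_right _ _) (le_max_right _ _)) hk
          calc 2 * |r| / lam ≤ (⌈2 * |r| / lam⌉₊ : ℝ) := Nat.le_ceil _
            _ ≤ (k:ℝ) := by exact_mod_cast h1
        rw [h (k+1) (by omega), h k hk0]
        push_cast
        exact case3_ratio lam r c hlam hc k hk1 hkc
    refine ⟨(k₁:ℝ) + 5 * (1-ρ)⁻¹, ?_, bounded_of_ratio p hp hp1 hs k₁ ρ hρ0 hρ1 hr⟩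
    have : 0 < (1-ρ)⁻¹ := inv_pos.mpr (by linarith)
    positivity
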